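/- Let n be a positive natural number and let R = ℤ[t,t⁻¹] be the ring of Laurent polynomials over ℤ. Let N_α be the R-submodule of (Fin (2n) → R) spanned by the elements (t−1) • e_i + e_{i−1} for i ∈ Fin (2n), where i−1 is taken cyclically in Fin (2n). Then the quotient module (Fin (2n) → R) ⧸ N_α is isomorphic as an R-module to R ⧸ Ideal.span {1 − (1−t)^{2n}}. -/

import Mathlib

open LaurentPolynomial

namespace WheelAux

noncomputable section

abbrev Rt := LaurentPolynomial ℤ

def u : Rt := 1 - T 1

variable (n : ℕ)

abbrev ee [NeZero (2*n)] (i : Fin (2*n)) : Fin (2*n) → Rt := Pi.single i 1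

def Nsub [NeZero (2*n)] : Submodule Rt (Fin (2*n) → Rt) :=
  Submodule.span Rt (Set.range fun i : Fin (2*n) =>
    (T 1 - 1 : Rt) • ee n i + ee n (i - 1))

lemma gen_mem [NeZero (2*n)] (i : Fin (2*n)) :
    (T 1 - 1 : Rt) • ee n i + ee n (i - 1) ∈ Nsub n :=
  Submodule.subset_span ⟨i, rfl⟩

lemma hT : (T 1 - 1 : Rt) = -u := by unfold u; ring

lemma fin_zero_sub_one {m : ℕ} [NeZero m] (h : 1 < m) :
    ((0 : Fin m) - 1) = ⟨m - 1, by omega⟩ := by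
  apply Fin.ext
  rw [Fin.sub_def]
  simp [Fin.val_one', Nat.mod_eq_of_lt h, Nat.mod_eq_of_lt (show m - 1 < m by omega)]

lemma fin_sub_one {m : ℕ} [NeZero m] (h : 1 < m) (i : Fin m) (hi : 0 < i.val) :
    i - 1 = ⟨i.val - 1, by omega⟩ := by
  apply Fin.ext
  rw [Fin.sub_def]
  simp only [Fin.val_one', Nat.mod_eq_of_lt h]
  have h2 : m - 1 + i.val = m + (i.val - 1) := by omega
  rw [h2, Nat.add_mod_left, Nat.mod_eq_of_lt (by omega)]

set_option maxHeartbeats 400000 in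
lemma heq_zero [NeZero (2*n)] (h2n : 0 < 2*n) :
    ee n ⟨2*n-1-0, by omega⟩ - u ^ (0+1) • ee n 0
      = (T 1 - 1 : Rt) • ee n 0 + ee n ⟨2*n-1, by omega⟩ := by
  rw [hT]
  show ee n ⟨2*n-1, by omega⟩ - u ^ 1 • ee n 0 = _
  rw [pow_one, neg_smul]
  abel

set_option maxHeartbeats 400000 in
lemma heq_succ [NeZero (2*n)] (k : ℕ) (hk : k + 1 < 2*n) :
    ee n ⟨2*n-1-(k+1), by omega⟩ - u ^ (k+1+1) • ee n 0
      = ((T 1 - 1 : Rt) • ee n ⟨2*n-1-k, by omega⟩ + ee n ⟨2*n-1-(k+1), by omega⟩)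
        + u • (ee n ⟨2*n-1-k, by omega⟩ - u ^ (k+1) • ee n 0) := by
  rw [hT, smul_sub, smul_smul, ← pow_succ', neg_smul]
  abel

set_option maxHeartbeats 400000 in
lemma heq_smul [NeZero (2*n)] :
    ((1:Rt) - u ^ (2*n)) • ee n 0 = ee n 0 - u ^ (2*n) • ee n 0 := by
  rw [sub_smul, one_smul]

variable (hn : 0 < n)
include hn

lemma key [NeZero (2*n)] (k : ℕ) (hk : k < 2*n) :
    ee n ⟨2*n-1-k, by omega⟩ - u ^ (k+1) • ee n 0 ∈ Nsub n := by
  induction k with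
  | zero =>
    have h0 : ((0 : Fin (2*n)) - 1) = ⟨2*n-1, by omega⟩ :=
      fin_zero_sub_one (by omega)
    have hmem := gen_mem n (0 : Fin (2*n))
    rw [h0] at hmem
    rw [heq_zero n (by omega)]; exact hmem
  | succ k ih =>
    have hih := ih (by omega)
    have hjm : (⟨2*n-1-k, by omega⟩ : Fin (2*n)) - 1 = ⟨2*n-1-(k+1), by omega⟩ := by
      rw [fin_sub_one (by omega) ⟨2*n-1-k, by omega⟩ (by simp; omega)]
      apply Fin.ext; simp; omega
    have hgen := gen_mem n ⟨2*n-1-k, by omega⟩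
    rw [hjm] at hgen
    have hsum := Submodule.add_mem _ hgen (Submodule.smul_mem _ u hih)
    rw [heq_succ n k hk]; exact hsum

lemma key' [NeZero (2*n)] (i : Fin (2*n)) :
    ee n i - u ^ (2*n - i.val) • ee n 0 ∈ Nsub n := by
  have hi : i.val < 2*n := i.isLt
  have hk := key n hn (2*n-1-i.val) (by omega)
  have h1 : (⟨2*n-1-(2*n-1-i.val), by omega⟩ : Fin (2*n)) = i := by
    apply Fin.ext; simp; omega
  have h2 : 2*n-1-i.val+1 = 2*n - i.val := by omega
  rwa [h1, h2] at hk

end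

end WheelAux

open WheelAux in
theorem wheel_meridians_alpha_module (n : ℕ) (hn : 0 < n) :
    haveI : NeZero (2 * n) := ⟨by omega⟩
    Nonempty
      (((Fin (2 * n) → LaurentPolynomial ℤ) ⧸ Submodule.span (LaurentPolynomial ℤ)
          (Set.range fun i : Fin (2 * n) =>
            (T 1 - 1 : LaurentPolynomial ℤ) •
                (Pi.single i (1 : LaurentPolynomial ℤ) : Fin (2 * n) → LaurentPolynomial ℤ) +
              Pi.single (i - 1) (1 : LaurentPolynomial ℤ))) ≃ₗ[LaurentPolynomial ℤ]
        (LaurentPolynomial ℤ ⧸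
          Ideal.span {(1 : LaurentPolynomial ℤ) - (1 - T 1) ^ (2 * n)})) := by
  haveI : NeZero (2 * n) := ⟨by omega⟩
  classical
  set I : Ideal Rt := Ideal.span {(1 : Rt) - (1 - T 1) ^ (2 * n)} with hI
  have hu : ((1 : Rt) - T 1) = u := rfl
  have hIu : ((1:Rt) - u ^ (2*n)) ∈ I := by
    rw [hI, hu]; exact Ideal.subset_span rfl
  -- the map on representatives
  let g : (Fin (2*n) → Rt) →ₗ[Rt] Rt :=
    Fintype.linearCombination Rt (fun i : Fin (2*n) => u ^ (2*n - i.val))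
  have hg : ∀ i : Fin (2*n), g (ee n i) = u ^ (2*n - i.val) := fun i => by
    simpa [g] using Fintype.linearCombination_apply_single (R := Rt)
      (v := fun i : Fin (2*n) => u ^ (2*n - i.val)) i (1 : Rt)
  let f : (Fin (2*n) → Rt) →ₗ[Rt] (Rt ⧸ I) := (Submodule.mkQ I).comp g
  have hNle : Nsub n ≤ LinearMap.ker f := by
    rw [Nsub, Submodule.span_le]
    rintro _ ⟨i, rfl⟩
    simp only [SetLike.mem_coe, LinearMap.mem_ker]
    have hgv : g ((T 1 - 1 : Rt) • ee n i + ee n (i - 1))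
        = (T 1 - 1) * u ^ (2*n - i.val) + u ^ (2*n - (i-1).val) := by
      rw [map_add, map_smul, hg, hg, smul_eq_mul]
    show Submodule.mkQ I (g _) = 0
    rw [hgv, Submodule.mkQ_apply, Submodule.Quotient.mk_eq_zero]
    by_cases h0 : i = 0
    · subst h0
      rw [fin_zero_sub_one (by omega)]
      have heq : (T 1 - 1 : Rt) * u ^ (2 * n - (0:Fin (2*n)).val) +
          u ^ (2 * n - (⟨2*n-1, by omega⟩ : Fin (2*n)).val)
          = u * ((1:Rt) - u ^ (2*n)) := by
        rw [hT]
        show (-u : Rt) * u ^ (2*n - 0) + u ^ (2*n - (2*n-1)) = _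
        rw [show 2*n - (2*n-1) = 1 by omega, Nat.sub_zero]
        ring
      rw [heq]
      exact I.mul_mem_left _ hIu
    · have hipos : 0 < i.val :=
        Nat.pos_of_ne_zero (fun hz => h0 (Fin.ext (by simp [hz])))
      rw [fin_sub_one (by omega) i hipos]
      have heq : (T 1 - 1 : Rt) * u ^ (2 * n - i.val) +
          u ^ (2 * n - (⟨i.val - 1, by omega⟩ : Fin (2*n)).val) = 0 := by
        rw [hT]
        show (-u : Rt) * u ^ (2*n - i.val) + u ^ (2*n - (i.val - 1)) = 0
        rw [show 2*n - (i.val - 1) = (2*n - i.val) + 1 by omega]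
        ring
      rw [heq]
      exact I.zero_mem
  let φ : ((Fin (2*n) → Rt) ⧸ Nsub n) →ₗ[Rt] (Rt ⧸ I) := Submodule.liftQ _ f hNle
  let h : Rt →ₗ[Rt] ((Fin (2*n) → Rt) ⧸ Nsub n) :=
    LinearMap.toSpanSingleton Rt _ ((Nsub n).mkQ (ee n 0))
  have hIle : (I : Submodule Rt Rt) ≤ LinearMap.ker h := by
    rw [hI, Ideal.span_le]
    rintro _ rfl
    simp only [SetLike.mem_coe, LinearMap.mem_ker, h, LinearMap.toSpanSingleton_apply,
      Submodule.mkQ_apply, ← Submodule.Quotient.mk_smul, Submodule.Quotient.mk_eq_zero]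
    have hk := key' n hn (0 : Fin (2*n))
    simp only [Fin.val_zero, Nat.sub_zero] at hk
    rw [hu, heq_smul n]
    exact hk
  let ψ : (Rt ⧸ I) →ₗ[Rt] ((Fin (2*n) → Rt) ⧸ Nsub n) := Submodule.liftQ _ h hIle
  have hψmk : ∀ p : Rt, ψ (Submodule.Quotient.mk p) = p • (Nsub n).mkQ (ee n 0) := by
    intro p
    rw [show ψ = Submodule.liftQ _ h hIle from rfl, Submodule.liftQ_apply]
    simp [h]
  have hφe : ∀ i : Fin (2*n), φ ((Nsub n).mkQ (ee n i))
      = Submodule.Quotient.mk (u ^ (2*n - i.val)) := by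
    intro i
    rw [show φ = Submodule.liftQ _ f hNle from rfl, Submodule.mkQ_apply,
      Submodule.liftQ_apply]
    show Submodule.mkQ I (g (ee n i)) = _
    rw [hg]
    rfl
  have hφψ : φ.comp ψ = LinearMap.id := by
    refine Submodule.linearMap_qext _ ?_
    refine LinearMap.ext_ring ?_
    simp only [LinearMap.comp_apply, Submodule.mkQ_apply, LinearMap.id_apply]
    rw [hψmk 1, one_smul, hφe 0]
    simp only [Fin.val_zero, Nat.sub_zero]
    rw [Submodule.Quotient.eq]
    simpa using Submodule.neg_mem _ hIu
  have hψφ : ψ.comp φ = LinearMap.id := by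
    refine Submodule.linearMap_qext _ ?_
    refine Module.Basis.ext (Pi.basisFun Rt (Fin (2*n))) ?_
    intro i
    have hbas : (Pi.basisFun Rt (Fin (2*n))) i = ee n i := by
      simp [Pi.basisFun_apply]
    simp only [LinearMap.comp_apply, Submodule.mkQ_apply, LinearMap.id_apply, hbas]
    rw [← Submodule.mkQ_apply, hφe i, hψmk]
    simp only [Submodule.mkQ_apply, ← Submodule.Quotient.mk_smul]
    rw [Submodule.Quotient.eq]
    have hm := Submodule.neg_mem _ (key' n hn i)
    rwa [neg_sub] at hm
  exact ⟨LinearEquiv.ofLinear φ ψ hφψ hψφ⟩
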